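/- Every finite faithful Haar system (ĥ_I)_{I∈𝒟_{≤n}} is distributionally equivalent to the standard Haar system (h_I)_{I∈𝒟_{≤n}}: for every family of scalars (a_I), the functions Σ a_I ĥ_I and Σ a_I h_I have the same distribution with respect to Lebesgue measure on [0,1). In particular, |supp ĥ_I| = |I| for all I ∈ 𝒟_{≤n}. -/

import Mathlib

open MeasureTheory

/-- The dyadic interval `[i / 2 ^ n, (i + 1) / 2 ^ n) ⊆ [0,1)`. -/
noncomputable def dyadicI (n i : ℕ) : Set ℝ :=
  Set.Ico ((i : ℝ) / 2 ^ n) ((i + 1 : ℝ) / 2 ^ n)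

/-- The Haar function `h_I = χ_{I⁺} - χ_{I⁻}` for `I = [i / 2 ^ n, (i + 1) / 2 ^ n)`. -/
noncomputable def haarF (n i : ℕ) : ℝ → ℝ := fun t =>
  (Set.Ico ((2 * i : ℝ) / 2 ^ (n + 1)) ((2 * i + 1 : ℝ) / 2 ^ (n + 1))).indicator
      (fun _ => (1 : ℝ)) t -
    (Set.Ico ((2 * i + 1 : ℝ) / 2 ^ (n + 1)) ((2 * i + 2 : ℝ) / 2 ^ (n + 1))).indicator
      (fun _ => (1 : ℝ)) t

open scoped Classical

lemma dyadicI_measurable (m k : ℕ) : MeasurableSet (dyadicI m k) := measurableSet_Ico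

lemma dyadicI_volume (m k : ℕ) : volume (dyadicI m k) = ENNReal.ofReal (1 / 2 ^ m) := by
  rw [dyadicI, Real.volume_Ico]
  congr 1
  ring

lemma dyadicI_disjoint_aux {m k k' : ℕ} (h : k < k') :
    Disjoint (dyadicI m k) (dyadicI m k') := by
  apply Set.Ico_disjoint_Ico.mpr
  have : ((k : ℝ) + 1) / 2 ^ m ≤ (k' : ℝ) / 2 ^ m := by
    gcongr
    exact_mod_cast h
  exact le_trans (min_le_left _ _) (le_trans this (le_max_right _ _))

lemma dyadicI_disjoint {m k k' : ℕ} (h : k ≠ k') :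
    Disjoint (dyadicI m k) (dyadicI m k') := by
  rcases h.lt_or_gt with hlt | hlt
  · exact dyadicI_disjoint_aux hlt
  · exact (dyadicI_disjoint_aux hlt).symm

lemma dyadicI_union (m k : ℕ) :
    dyadicI m k = dyadicI (m + 1) (2 * k) ∪ dyadicI (m + 1) (2 * k + 1) := by
  simp only [dyadicI]
  push_cast
  rw [Set.Ico_union_Ico_eq_Ico]
  · congr 1 <;> ring
  · gcongr <;> norm_num
  · gcongr <;> norm_num

lemma haarF_eq (m k : ℕ) (t : ℝ) :
    haarF m k t = if t ∈ dyadicI (m + 1) (2 * k) then 1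
      else if t ∈ dyadicI (m + 1) (2 * k + 1) then -1 else 0 := by
  have h1 : Set.Ico ((2 * (k:ℝ)) / 2 ^ (m + 1)) ((2 * k + 1 : ℝ) / 2 ^ (m + 1))
      = dyadicI (m + 1) (2 * k) := by
    unfold dyadicI; push_cast; ring_nf
  have h2 : Set.Ico ((2 * (k:ℝ) + 1) / 2 ^ (m + 1)) ((2 * k + 2 : ℝ) / 2 ^ (m + 1))
      = dyadicI (m + 1) (2 * k + 1) := by
    unfold dyadicI; push_cast; ring_nf
  have hd := dyadicI_disjoint (m := m + 1) (k := 2 * k) (k' := 2 * k + 1) (by omega)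
  show _ - _ = _
  rw [h1, h2]
  by_cases H1 : t ∈ dyadicI (m + 1) (2 * k) <;> by_cases H2 : t ∈ dyadicI (m + 1) (2 * k + 1)
  · exact absurd H2 (Set.disjoint_left.mp hd H1)
  all_goals simp [Set.indicator, H1, H2]

lemma haarF_left {m k : ℕ} {t : ℝ} (h : t ∈ dyadicI (m + 1) (2 * k)) :
    haarF m k t = 1 := by rw [haarF_eq]; simp [h]

lemma haarF_right {m k : ℕ} {t : ℝ} (h : t ∈ dyadicI (m + 1) (2 * k + 1)) :
    haarF m k t = -1 := by
  have hd := dyadicI_disjoint (m := m + 1) (k := 2 * k) (k' := 2 * k + 1) (by omega)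
  rw [haarF_eq]
  simp [h, Set.disjoint_right.mp hd h]

lemma haarF_zero {m k : ℕ} {t : ℝ} (h : t ∉ dyadicI m k) :
    haarF m k t = 0 := by
  rw [dyadicI_union] at h
  rw [haarF_eq]
  simp only [Set.mem_union, not_or] at h
  simp [h.1, h.2]

lemma haarF_pm {m k : ℕ} {t : ℝ} (h : t ∈ dyadicI m k) :
    haarF m k t = 1 ∨ haarF m k t = -1 := by
  rw [dyadicI_union] at h
  rcases h with h | h
  · exact Or.inl (haarF_left h)
  · exact Or.inr (haarF_right h)

structure FaithfulSys (n : ℕ) where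
  B : ℕ → ℕ → Finset (ℕ × ℕ)
  θ : ℕ × ℕ → ℝ
  hh : ℕ → ℕ → ℝ → ℝ
  hθ : ∀ p, θ p = 1 ∨ θ p = -1
  hdisjoint_within : ∀ j ≤ n, ∀ i < 2 ^ j, ∀ p ∈ B j i, ∀ q ∈ B j i, p ≠ q →
      Disjoint (dyadicI p.1 p.2) (dyadicI q.1 q.2)
  hdef : ∀ j ≤ n, ∀ i < 2 ^ j, hh j i = fun t => ∑ p ∈ B j i, θ p * haarF p.1 p.2 t
  hroot : (⋃ p ∈ B 0 0, dyadicI p.1 p.2) = Set.Ico (0 : ℝ) 1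
  hfaithful : ∀ j < n, ∀ i < 2 ^ j,
      ((⋃ p ∈ B (j + 1) (2 * i), dyadicI p.1 p.2) = {t | hh j i t = 1}) ∧
      ((⋃ p ∈ B (j + 1) (2 * i + 1), dyadicI p.1 p.2) = {t | hh j i t = -1})

namespace FaithfulSys

variable {n : ℕ} (F : FaithfulSys n)

/-- The union of the collection `𝓑 j i`. -/
def E (j i : ℕ) : Set ℝ := ⋃ p ∈ F.B j i, dyadicI p.1 p.2

lemma hh_eq_of_mem {j i : ℕ} (hj : j ≤ n) (hi : i < 2 ^ j) {p : ℕ × ℕ}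
    (hp : p ∈ F.B j i) {t : ℝ} (ht : t ∈ dyadicI p.1 p.2) :
    F.hh j i t = F.θ p * haarF p.1 p.2 t := by
  rw [F.hdef j hj i hi]
  apply Finset.sum_eq_single_of_mem p hp
  intro q hq hqp
  have := F.hdisjoint_within j hj i hi q hq p hp hqp
  rw [haarF_zero (Set.disjoint_right.mp this ht), mul_zero]

lemma hh_eq_zero {j i : ℕ} (hj : j ≤ n) (hi : i < 2 ^ j) {t : ℝ}
    (ht : t ∉ F.E j i) : F.hh j i t = 0 := by
  rw [F.hdef j hj i hi]
  apply Finset.sum_eq_zero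
  intro p hp
  have : t ∉ dyadicI p.1 p.2 := fun h => ht (Set.mem_biUnion hp h)
  rw [haarF_zero this, mul_zero]

lemma hh_pm {j i : ℕ} (hj : j ≤ n) (hi : i < 2 ^ j) {t : ℝ}
    (ht : t ∈ F.E j i) : F.hh j i t = 1 ∨ F.hh j i t = -1 := by
  obtain ⟨p, hp, htp⟩ := Set.mem_iUnion₂.mp ht
  rw [F.hh_eq_of_mem hj hi hp htp]
  rcases F.hθ p with h | h <;> rcases haarF_pm htp with h' | h' <;> rw [h, h'] <;> norm_num

lemma mem_E_of_ne_zero {j i : ℕ} (hj : j ≤ n) (hi : i < 2 ^ j) {t : ℝ}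
    (ht : F.hh j i t ≠ 0) : t ∈ F.E j i := by
  by_contra h
  exact ht (F.hh_eq_zero hj hi h)

/-- The level set `{hh = c}` as an explicit finite union of dyadic halves. -/
lemma setOf_hh {j i : ℕ} (hj : j ≤ n) (hi : i < 2 ^ j) {c : ℝ} (hc : c = 1 ∨ c = -1) :
    {t | F.hh j i t = c} =
      ⋃ p ∈ F.B j i, dyadicI (p.1 + 1) (if F.θ p = c then 2 * p.2 else 2 * p.2 + 1) := by
  ext t
  simp only [Set.mem_setOf_eq, Set.mem_iUnion₂]
  constructor
  · intro h
    have hne : F.hh j i t ≠ 0 := by rw [h]; rcases hc with rfl | rfl <;> norm_num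
    obtain ⟨p, hp, htp⟩ := Set.mem_iUnion₂.mp (F.mem_E_of_ne_zero hj hi hne)
    refine ⟨p, hp, ?_⟩
    rw [F.hh_eq_of_mem hj hi hp htp] at h
    rw [dyadicI_union] at htp
    rcases htp with hl | hr
    · rw [haarF_left hl, mul_one] at h
      rw [if_pos h]; exact hl
    · rw [haarF_right hr] at h
      have hθp : F.θ p ≠ c := by
        rcases F.hθ p with h' | h' <;> rcases hc with rfl | rfl <;> rw [h'] at h ⊢ <;> revert h <;> norm_num
      rw [if_neg hθp]; exact hr
  · rintro ⟨p, hp, htp⟩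
    by_cases hθp : F.θ p = c
    · rw [if_pos hθp] at htp
      have htK : t ∈ dyadicI p.1 p.2 := by rw [dyadicI_union]; exact Or.inl htp
      rw [F.hh_eq_of_mem hj hi hp htK, haarF_left htp, mul_one, hθp]
    · rw [if_neg hθp] at htp
      have htK : t ∈ dyadicI p.1 p.2 := by rw [dyadicI_union]; exact Or.inr htp
      rw [F.hh_eq_of_mem hj hi hp htK, haarF_right htp]
      rcases F.hθ p with h' | h' <;> rcases hc with rfl | rfl <;>
        first | exact absurd h' hθp | (rw [h']; norm_num)

lemma dyadicI_half_subset (m k b : ℕ) (hb : b < 2) :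
    dyadicI (m + 1) (2 * k + b) ⊆ dyadicI m k := by
  rw [dyadicI_union m k]
  interval_cases b
  · simp [Set.subset_union_left]
  · simp [Set.subset_union_right]

lemma E_measurable (j i : ℕ) : MeasurableSet (F.E j i) :=
  (F.B j i).measurableSet_biUnion (fun p _ => dyadicI_measurable p.1 p.2)

lemma volume_E {j i : ℕ} (hj : j ≤ n) (hi : i < 2 ^ j) :
    volume (F.E j i) = ∑ p ∈ F.B j i, ENNReal.ofReal (1 / 2 ^ p.1) := by
  rw [E, measure_biUnion_finset]
  · exact Finset.sum_congr rfl fun p _ => dyadicI_volume p.1 p.2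
  · intro p hp q hq hpq
    exact F.hdisjoint_within j hj i hi p hp q hq hpq
  · exact fun p _ => dyadicI_measurable p.1 p.2

lemma setOf_hh_measurable {j i : ℕ} (hj : j ≤ n) (hi : i < 2 ^ j) {c : ℝ}
    (hc : c = 1 ∨ c = -1) : MeasurableSet {t | F.hh j i t = c} := by
  rw [F.setOf_hh hj hi hc]
  exact (F.B j i).measurableSet_biUnion (fun p _ => dyadicI_measurable _ _)

lemma volume_setOf_hh {j i : ℕ} (hj : j ≤ n) (hi : i < 2 ^ j) {c : ℝ}
    (hc : c = 1 ∨ c = -1) :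
    volume {t | F.hh j i t = c} = ENNReal.ofReal (1 / 2) * volume (F.E j i) := by
  rw [F.setOf_hh hj hi hc, measure_biUnion_finset, F.volume_E hj hi, Finset.mul_sum]
  · refine Finset.sum_congr rfl fun p _ => ?_
    have h2 : (0:ℝ) ≤ 1 / 2 ^ p.1 := by positivity
    have : ENNReal.ofReal (1 / 2) * ENNReal.ofReal (1 / 2 ^ p.1)
        = ENNReal.ofReal (1 / 2 ^ (p.1 + 1)) := by
      rw [← ENNReal.ofReal_mul (by norm_num)]
      congr 1
      rw [pow_succ]
      ring
    split <;> rw [dyadicI_volume, ← this]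
  · intro p hp q hq hpq
    refine Disjoint.mono ?_ ?_ (F.hdisjoint_within j hj i hi p hp q hq hpq) <;>
      · dsimp only
        split
        · simpa using dyadicI_half_subset _ _ 0 (by omega)
        · exact dyadicI_half_subset _ _ 1 (by omega)
  · exact fun p _ => dyadicI_measurable _ _

lemma E_eq_union {j i : ℕ} (hj : j ≤ n) (hi : i < 2 ^ j) :
    F.E j i = {t | F.hh j i t = 1} ∪ {t | F.hh j i t = -1} := by
  ext t
  constructor
  · intro ht
    exact F.hh_pm hj hi ht
  · rintro (ht | ht) <;>
      exact F.mem_E_of_ne_zero hj hi (by rw [Set.mem_setOf_eq] at ht; rw [ht]; norm_num)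

/-- Dyadic "cells" of the system, level `j ≤ n + 1`. -/
def Cell (j k : ℕ) : Set ℝ :=
  if j ≤ n then F.E j k else {t | F.hh n (k / 2) t = if k % 2 = 0 then 1 else -1}

lemma cell_succ {j i : ℕ} (hj : j ≤ n) (hi : i < 2 ^ j) (b : ℕ) (hb : b < 2) :
    F.Cell (j + 1) (2 * i + b) = {t | F.hh j i t = if b = 0 then 1 else -1} := by
  rcases lt_or_eq_of_le hj with hj' | rfl
  · rw [Cell, if_pos (by omega)]
    interval_cases b
    · rw [show 2 * i + 0 = 2 * i by ring, E, show ((if (0:ℕ) = 0 then (1:ℝ) else -1) = 1) by norm_num]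
      exact (F.hfaithful j hj' i hi).1
    · rw [E, show ((if (1:ℕ) = 0 then (1:ℝ) else -1) = -1) by norm_num]
      exact (F.hfaithful j hj' i hi).2
  · rw [Cell, if_neg (by omega)]
    have h1 : (2 * i + b) / 2 = i := by omega
    have h2 : (2 * i + b) % 2 = b % 2 := by omega
    rw [h1, h2]
    interval_cases b <;> simp

lemma cell_measurable {j k : ℕ} (hj : j ≤ n + 1) (hk : k < 2 ^ j) :
    MeasurableSet (F.Cell j k) := by
  rw [Cell]
  split
  · exact F.E_measurable j k
  · have hn : ¬ j ≤ n := by assumption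
    have : k / 2 < 2 ^ n := by
      have : j = n + 1 := by omega
      subst this
      omega
    exact F.setOf_hh_measurable le_rfl this (by split <;> simp)

lemma cell_subset {j k : ℕ} (hj : j ≤ n) (hk : k < 2 ^ (j + 1)) :
    F.Cell (j + 1) k ⊆ F.Cell j (k / 2) := by
  have h2 : (2:ℕ) ^ (j + 1) = 2 * 2 ^ j := by rw [pow_succ]; ring
  have hk2 : k / 2 < 2 ^ j := by omega
  have hkeq : k = 2 * (k / 2) + k % 2 := by omega
  have hcc : F.Cell (j + 1) k = {t | F.hh j (k / 2) t = if k % 2 = 0 then 1 else -1} := by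
    conv_lhs => rw [hkeq]
    rw [cell_succ F hj hk2 (k % 2) (by omega)]
  rw [hcc]
  intro t ht
  rw [Set.mem_setOf_eq] at ht
  have hne : F.hh j (k / 2) t ≠ 0 := by rw [ht]; split <;> norm_num
  rw [Cell, if_pos hj]
  exact F.mem_E_of_ne_zero hj hk2 hne

lemma cell_props : ∀ j ≤ n + 1,
    (∀ k < 2 ^ j, volume (F.Cell j k) = ENNReal.ofReal (1 / 2 ^ j)) ∧
    (∀ k < 2 ^ j, ∀ k' < 2 ^ j, k ≠ k' → Disjoint (F.Cell j k) (F.Cell j k')) ∧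
    (⋃ k ∈ Finset.range (2 ^ j), F.Cell j k) = Set.Ico (0 : ℝ) 1 := by
  intro j
  induction j with
  | zero =>
    intro _
    have hc : F.Cell 0 0 = Set.Ico (0:ℝ) 1 := by
      rw [Cell, if_pos (Nat.zero_le n)]
      exact F.hroot
    refine ⟨?_, ?_, ?_⟩
    · intro k hk
      interval_cases k
      rw [hc, Real.volume_Ico]
      norm_num
    · intro k hk k' hk' hne
      interval_cases k <;> interval_cases k' <;> omega
    · simp [hc]
  | succ j ih =>
    intro hj1
    have hj : j ≤ n := by omega
    obtain ⟨ihv, ihd, ihu⟩ := ih (by omega)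
    have h2 : (2:ℕ) ^ (j + 1) = 2 * 2 ^ j := by rw [pow_succ]; ring
    have hcell : ∀ k < 2 ^ (j + 1),
        F.Cell (j + 1) k = {t | F.hh j (k / 2) t = if k % 2 = 0 then 1 else -1} := by
      intro k hk
      have hk2 : k / 2 < 2 ^ j := by omega
      have hkeq : k = 2 * (k / 2) + k % 2 := by omega
      conv_lhs => rw [hkeq]
      rw [cell_succ F hj hk2 (k % 2) (by omega)]
    have hEcell : ∀ i < 2 ^ j, F.E j i = F.Cell j i := by
      intro i _
      rw [Cell, if_pos hj]
    refine ⟨?_, ?_, ?_⟩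
    · intro k hk
      have hk2 : k / 2 < 2 ^ j := by omega
      rw [hcell k hk, F.volume_setOf_hh hj hk2 (by split <;> simp), hEcell _ hk2,
        ihv _ hk2, ← ENNReal.ofReal_mul (by norm_num)]
      congr 1
      rw [pow_succ]
      ring
    · intro k hk k' hk' hne
      have hk2 : k / 2 < 2 ^ j := by omega
      have hk2' : k' / 2 < 2 ^ j := by omega
      by_cases hq : k / 2 = k' / 2
      · have hb : k % 2 ≠ k' % 2 := by omega
        rw [hcell k hk, hcell k' hk']
        rw [Set.disjoint_left]
        intro t ht ht'
        rw [Set.mem_setOf_eq] at ht ht'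
        rw [hq] at ht
        rw [ht] at ht'
        rcases Nat.mod_two_eq_zero_or_one k with h | h <;>
          rcases Nat.mod_two_eq_zero_or_one k' with h' | h' <;>
            first
              | omega
              | (rw [h, h'] at ht'; norm_num at ht')
      · exact Disjoint.mono (F.cell_subset hj hk) (F.cell_subset hj hk')
          (ihd (k / 2) hk2 (k' / 2) hk2' hq)
    · ext t
      simp only [Set.mem_iUnion, Finset.mem_range, exists_prop]
      constructor
      · rintro ⟨k, hk, ht⟩
        have := F.cell_subset hj hk ht
        rw [← ihu]
        simp only [Set.mem_iUnion, Finset.mem_range, exists_prop]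
        exact ⟨k / 2, by omega, this⟩
      · intro ht
        rw [← ihu] at ht
        simp only [Set.mem_iUnion, Finset.mem_range, exists_prop] at ht
        obtain ⟨i, hi, hti⟩ := ht
        rw [← hEcell _ hi] at hti
        rcases F.hh_pm hj hi hti with h | h
        · refine ⟨2 * i, by omega, ?_⟩
          have h0 : F.Cell (j + 1) (2 * i) = {t | F.hh j i t = if (0:ℕ) = 0 then 1 else -1} :=
            cell_succ F hj hi 0 (by omega)
          rw [h0]
          simpa using h
        · refine ⟨2 * i + 1, by omega, ?_⟩
          rw [cell_succ F hj hi 1 (by omega)]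
          simpa using h

lemma mem_cell_anc {m : ℕ} (hm : m < 2 ^ (n + 1)) {t : ℝ}
    (ht : t ∈ F.Cell (n + 1) m) : ∀ d ≤ n + 1, t ∈ F.Cell (n + 1 - d) (m / 2 ^ d) := by
  intro d
  induction d with
  | zero => intro _; simpa using ht
  | succ d ihd =>
    intro hd1
    have hd : d ≤ n := by omega
    have ht' := ihd (by omega)
    have heq : n + 1 - d = (n - d) + 1 := by omega
    rw [heq] at ht'
    have hdiv : m / 2 ^ d < 2 ^ (n - d + 1) := by
      apply Nat.div_lt_of_lt_mul
      calc m < 2 ^ (n + 1) := hm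
        _ = 2 ^ d * 2 ^ (n - d + 1) := by rw [← pow_add]; congr 1; omega
    have := F.cell_subset (by omega : n - d ≤ n) hdiv ht'
    have hdd : m / 2 ^ d / 2 = m / 2 ^ (d + 1) := by
      rw [Nat.div_div_eq_div_mul, pow_succ]
    rw [hdd] at this
    have : n + 1 - (d + 1) = n - d := by omega
    rw [this]
    exact ‹t ∈ F.Cell (n - d) (m / 2 ^ (d + 1))›

lemma hh_value {m : ℕ} (hm : m < 2 ^ (n + 1)) {t : ℝ} (ht : t ∈ F.Cell (n + 1) m)
    {j : ℕ} (hj : j ≤ n) {k : ℕ} (hk : k < 2 ^ j) :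
    F.hh j k t = if k = m / 2 ^ (n + 1 - j)
      then (if (m / 2 ^ (n - j)) % 2 = 0 then 1 else -1) else 0 := by
  set q := m / 2 ^ (n - j) with hqdef
  have hq : q < 2 ^ (j + 1) := by
    apply Nat.div_lt_of_lt_mul
    calc m < 2 ^ (n + 1) := hm
      _ = 2 ^ (n - j) * 2 ^ (j + 1) := by rw [← pow_add]; congr 1; omega
  have hq2 : q / 2 = m / 2 ^ (n + 1 - j) := by
    rw [hqdef, Nat.div_div_eq_div_mul, ← pow_succ]
    congr 2
    omega
  have hq2lt : q / 2 < 2 ^ j := by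
    have h2 : (2:ℕ) ^ (j + 1) = 2 * 2 ^ j := by rw [pow_succ]; ring
    omega
  have htq : t ∈ F.Cell (j + 1) q := by
    have := F.mem_cell_anc hm ht (n - j) (by omega)
    rwa [show n + 1 - (n - j) = j + 1 by omega] at this
  have hqeq : q = 2 * (q / 2) + q % 2 := by omega
  rw [hqeq, cell_succ F hj hq2lt (q % 2) (by omega)] at htq
  rw [Set.mem_setOf_eq] at htq
  by_cases hkq : k = m / 2 ^ (n + 1 - j)
  · rw [if_pos hkq, hkq, ← hq2, htq]
  · rw [if_neg hkq]
    have htj : t ∈ F.Cell j (q / 2) := by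
      have := F.mem_cell_anc hm ht (n + 1 - j) (by omega)
      rwa [show n + 1 - (n + 1 - j) = j by omega, ← hq2] at this
    have hdisj := (F.cell_props j (by omega)).2.1 (q / 2) hq2lt k hk (by omega)
    have htk : t ∉ F.Cell j k := Set.disjoint_left.mp hdisj htj
    rw [Cell, if_pos hj] at htk
    exact F.hh_eq_zero hj hk htk

lemma anc_lt {m j : ℕ} (hm : m < 2 ^ (n + 1)) (hj : j ≤ n) :
    m / 2 ^ (n + 1 - j) < 2 ^ j := by
  apply Nat.div_lt_of_lt_mul
  calc m < 2 ^ (n + 1) := hm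
    _ = 2 ^ (n + 1 - j) * 2 ^ j := by rw [← pow_add]; congr 1; omega

lemma sum_eq (a : ℕ → ℕ → ℝ) {m : ℕ} (hm : m < 2 ^ (n + 1)) {t : ℝ}
    (ht : t ∈ F.Cell (n + 1) m) :
    ∑ j ∈ Finset.range (n + 1), ∑ i ∈ Finset.range (2 ^ j), a j i * F.hh j i t =
    ∑ j ∈ Finset.range (n + 1), a j (m / 2 ^ (n + 1 - j)) *
      (if (m / 2 ^ (n - j)) % 2 = 0 then 1 else -1) := by
  refine Finset.sum_congr rfl fun j hj => ?_
  have hjn : j ≤ n := by have := Finset.mem_range.mp hj; omega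
  rw [Finset.sum_eq_single_of_mem (m / 2 ^ (n + 1 - j))
    (Finset.mem_range.mpr (anc_lt hm hjn))]
  · rw [F.hh_value hm ht hjn (anc_lt hm hjn), if_pos rfl]
  · intro i hi hne
    rw [F.hh_value hm ht hjn (Finset.mem_range.mp hi), if_neg hne, mul_zero]

lemma main_vol (a : ℕ → ℕ → ℝ) (s : Set ℝ) :
    volume (Set.Ico (0 : ℝ) 1 ∩
      (fun t => ∑ j ∈ Finset.range (n + 1), ∑ i ∈ Finset.range (2 ^ j),
        a j i * F.hh j i t) ⁻¹' s) =
    ∑ m ∈ Finset.range (2 ^ (n + 1)),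
      (if (∑ j ∈ Finset.range (n + 1), a j (m / 2 ^ (n + 1 - j)) *
        (if (m / 2 ^ (n - j)) % 2 = 0 then (1:ℝ) else -1)) ∈ s
        then ENNReal.ofReal (1 / 2 ^ (n + 1)) else 0) := by
  obtain ⟨hv, hd, hu⟩ := F.cell_props (n + 1) le_rfl
  rw [← hu, Set.iUnion₂_inter]
  have hsets : ∀ m ∈ Finset.range (2 ^ (n + 1)),
      F.Cell (n + 1) m ∩ (fun t => ∑ j ∈ Finset.range (n + 1),
        ∑ i ∈ Finset.range (2 ^ j), a j i * F.hh j i t) ⁻¹' s =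
      (if (∑ j ∈ Finset.range (n + 1), a j (m / 2 ^ (n + 1 - j)) *
        (if (m / 2 ^ (n - j)) % 2 = 0 then (1:ℝ) else -1)) ∈ s
        then F.Cell (n + 1) m else ∅) := by
    intro m hm
    have hm' := Finset.mem_range.mp hm
    ext t
    simp only [Set.mem_inter_iff, Set.mem_preimage]
    constructor
    · rintro ⟨htc, hts⟩
      rw [F.sum_eq a hm' htc] at hts
      rw [if_pos hts]
      exact htc
    · intro ht
      split at ht
      · exact ⟨ht, by rw [F.sum_eq a hm' ht]; assumption⟩
      · exact absurd ht (Set.notMem_empty t)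
  rw [Set.iUnion₂_congr hsets]
  rw [measure_biUnion_finset]
  · refine Finset.sum_congr rfl fun m hm => ?_
    split
    · exact hv m (Finset.mem_range.mp hm)
    · exact measure_empty
  · intro p hp q hq hpq
    have hsub : ∀ m : ℕ, (if (∑ j ∈ Finset.range (n + 1), a j (m / 2 ^ (n + 1 - j)) *
        (if (m / 2 ^ (n - j)) % 2 = 0 then (1:ℝ) else -1)) ∈ s
        then F.Cell (n + 1) m else ∅) ⊆ F.Cell (n + 1) m := by
      intro m
      split
      · exact le_rfl
      · exact Set.empty_subset _
    exact Disjoint.mono (hsub p) (hsub q)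
      (hd p (Finset.mem_range.mp hp) q (Finset.mem_range.mp hq) hpq)
  · intro m hm
    split
    · exact F.cell_measurable le_rfl (Finset.mem_range.mp hm)
    · exact MeasurableSet.empty

lemma volume_support {j i : ℕ} (hj : j ≤ n) (hi : i < 2 ^ j) :
    volume (Function.support (F.hh j i)) = ENNReal.ofReal (1 / 2 ^ j) := by
  have hsupp : Function.support (F.hh j i) = F.E j i := by
    ext t
    constructor
    · exact fun ht => F.mem_E_of_ne_zero hj hi ht
    · intro ht
      rcases F.hh_pm hj hi ht with h | h <;> rw [Function.mem_support, h] <;> norm_num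
  rw [hsupp, show F.E j i = F.Cell j i from (if_pos hj).symm]
  exact (F.cell_props j (by omega)).1 i hi

end FaithfulSys

lemma setOf_haarF_one (m k : ℕ) : {t : ℝ | haarF m k t = 1} = dyadicI (m + 1) (2 * k) := by
  ext t
  rw [Set.mem_setOf_eq, haarF_eq]
  by_cases h1 : t ∈ dyadicI (m + 1) (2 * k)
  · simp [h1]
  · rw [if_neg h1]
    constructor
    · intro h
      exfalso
      revert h
      split <;> norm_num
    · intro h
      exact absurd h h1

lemma setOf_haarF_neg_one (m k : ℕ) :
    {t : ℝ | haarF m k t = -1} = dyadicI (m + 1) (2 * k + 1) := by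
  have hd := dyadicI_disjoint (m := m + 1) (k := 2 * k) (k' := 2 * k + 1) (by omega)
  ext t
  rw [Set.mem_setOf_eq, haarF_eq]
  by_cases h2 : t ∈ dyadicI (m + 1) (2 * k + 1)
  · rw [if_neg (Set.disjoint_right.mp hd h2), if_pos h2]
    simp [h2]
  · constructor
    · intro h
      exfalso
      by_cases h1 : t ∈ dyadicI (m + 1) (2 * k)
      · rw [if_pos h1] at h; norm_num at h
      · rw [if_neg h1, if_neg h2] at h; norm_num at h
    · intro h
      exact absurd h h2

/-- A finite faithful Haar system `(ĥ_I)_{I ∈ 𝒟_{≤ n}}` (indexed by pairs `(j, i)`,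
`j ≤ n`, `i < 2 ^ j`; the collections `𝓑 j i` of dyadic intervals are encoded as finsets
of pairs `(m, k)` with `k < 2 ^ m`) is distributionally equivalent to the standard Haar
system `(h_I)_{I ∈ 𝒟_{≤ n}}`: for every family of scalars `(a_I)`, the functions
`Σ a_I ĥ_I` and `Σ a_I h_I` have the same distribution on `[0,1)`.  In particular,
`|supp ĥ_I| = |I|` for all `I ∈ 𝒟_{≤ n}`. -/
theorem faithful_haar_system_distributionally_equivalent
    (n : ℕ) (𝓑 : ℕ → ℕ → Finset (ℕ × ℕ)) (θ : ℕ × ℕ → ℝ)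
    (hhat : ℕ → ℕ → ℝ → ℝ)
    (hθ : ∀ p, θ p = 1 ∨ θ p = -1)
    (hvalid : ∀ j ≤ n, ∀ i < 2 ^ j, ∀ p ∈ 𝓑 j i, p.2 < 2 ^ p.1)
    (hne : ∀ j ≤ n, ∀ i < 2 ^ j, (𝓑 j i).Nonempty)
    (hdisjoint_within : ∀ j ≤ n, ∀ i < 2 ^ j, ∀ p ∈ 𝓑 j i, ∀ q ∈ 𝓑 j i, p ≠ q →
      Disjoint (dyadicI p.1 p.2) (dyadicI q.1 q.2))
    (hdisjoint_between : ∀ j ≤ n, ∀ i < 2 ^ j, ∀ j' ≤ n, ∀ i' < 2 ^ j',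
      (j, i) ≠ (j', i') → 𝓑 j i ∩ 𝓑 j' i' = ∅)
    (hdef : ∀ j ≤ n, ∀ i < 2 ^ j,
      hhat j i = fun t => ∑ p ∈ 𝓑 j i, θ p * haarF p.1 p.2 t)
    (hroot : (⋃ p ∈ 𝓑 0 0, dyadicI p.1 p.2) = Set.Ico (0 : ℝ) 1)
    (hfaithful : ∀ j < n, ∀ i < 2 ^ j,
      ((⋃ p ∈ 𝓑 (j + 1) (2 * i), dyadicI p.1 p.2) = {t | hhat j i t = 1}) ∧
      ((⋃ p ∈ 𝓑 (j + 1) (2 * i + 1), dyadicI p.1 p.2) = {t | hhat j i t = -1})) :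
    (∀ (a : ℕ → ℕ → ℝ) (s : Set ℝ), MeasurableSet s →
      volume (Set.Ico (0 : ℝ) 1 ∩
        (fun t => ∑ j ∈ Finset.range (n + 1), ∑ i ∈ Finset.range (2 ^ j),
          a j i * hhat j i t) ⁻¹' s) =
      volume (Set.Ico (0 : ℝ) 1 ∩
        (fun t => ∑ j ∈ Finset.range (n + 1), ∑ i ∈ Finset.range (2 ^ j),
          a j i * haarF j i t) ⁻¹' s)) ∧
    (∀ j ≤ n, ∀ i < 2 ^ j,
      volume (Function.support (hhat j i)) = ENNReal.ofReal (1 / 2 ^ j)) := by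
  
  let F1 : FaithfulSys n :=
    ⟨𝓑, θ, hhat, hθ, hdisjoint_within, hdef, hroot, hfaithful⟩
  let F2 : FaithfulSys n :=
    { B := fun j i => {(j, i)}
      θ := fun _ => 1
      hh := haarF
      hθ := fun _ => Or.inl rfl
      hdisjoint_within := by
        intro j _ i _ p hp q hq hpq
        rw [Finset.mem_singleton] at hp hq
        exact absurd (hp.trans hq.symm) hpq
      hdef := by
        intro j _ i _
        funext t
        rw [Finset.sum_singleton, one_mul]
      hroot := by
        have hq : ∀ q : ℕ × ℕ, (⋃ p ∈ ({q} : Finset (ℕ × ℕ)), dyadicI p.1 p.2)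
            = dyadicI q.1 q.2 := by intro q; simp
        rw [hq ((0:ℕ), (0:ℕ))]
        unfold dyadicI
        norm_num
      hfaithful := by
        intro j hj i hi
        have hq : ∀ q : ℕ × ℕ, (⋃ p ∈ ({q} : Finset (ℕ × ℕ)), dyadicI p.1 p.2)
            = dyadicI q.1 q.2 := by intro q; simp
        constructor
        · rw [hq (j+1, 2*i)]
          exact (setOf_haarF_one j i).symm
        · rw [hq (j+1, 2*i+1)]
          exact (setOf_haarF_neg_one j i).symm }
  constructor
  · intro a s _
    exact (F1.main_vol a s).trans (F2.main_vol a s).symm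
  · intro j hj i hi
    exact F1.volume_support hj hi
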